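/- Let k ≥ 1, C ≥ 2, λᵢ = 1/C for all i ∈ {1,…,C}, and let ψ : ℝ^k → ℝ be strictly convex and argument-wise strictly increasing. Then the unique minimizer A* of S over 𝒜* satisfies A*_{ii} = 1 for all i and A*_{ij} = −1/(C−1) for all i ≠ j. Consequently, if d ≥ C − 1 and M ∈ ℝ^{d×C} has unit-norm columns μ₁,…,μ_C with MᵀM = A*, then ∑_{i=1}^C μᵢ = 0, i.e., the columns form an equiangular tight frame (simplex ETF) in ℝ^d. -/

import Mathlib

open Matrix

/-- `ψ : ℝ^k → ℝ` is argument-wise strictly increasing. -/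
def ArgwiseStrictMono {k : ℕ} (ψ : (Fin k → ℝ) → ℝ) : Prop :=
  ∀ (i : Fin k) (t : Fin k → ℝ) (s s' : ℝ), s < s' →
    ψ (Function.update t i s) < ψ (Function.update t i s')

/-- `S(A) = ∑_{i, j₁,…,j_k} (λᵢ ∏ₜ λ_{jₜ}) ψ(A_{i j₁} − 1, …, A_{i j_k} − 1)`. -/
noncomputable def S {k C : ℕ} (ψ : (Fin k → ℝ) → ℝ) (lam : Fin C → ℝ)
    (A : Matrix (Fin C) (Fin C) ℝ) : ℝ :=
  ∑ i : Fin C, ∑ j : Fin k → Fin C,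
    (lam i * ∏ t, lam (j t)) * ψ (fun t => A i (j t) - 1)

/-- `𝒜*` : real symmetric PSD `C×C` matrices with unit diagonal. -/
def AstarSet (C : ℕ) : Set (Matrix (Fin C) (Fin C) ℝ) :=
  {A | A.PosSemidef ∧ ∀ i, A i i = 1}

section Aux
variable {k : ℕ} {ψ : (Fin k → ℝ) → ℝ}

lemma argwise_mono (h : ArgwiseStrictMono ψ) {u v : Fin k → ℝ} (huv : u ≤ v) :
    ψ u ≤ ψ v := by
  have key : ∀ s : Finset (Fin k), ψ (s.piecewise u v) ≤ ψ v := by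
    intro s
    induction s using Finset.induction with
    | empty => simp
    | @insert i s his ih =>
      rw [Finset.piecewise_insert]
      have hw : (s.piecewise u v) i = v i := Finset.piecewise_eq_of_notMem _ _ _ his
      have hupd : Function.update (s.piecewise u v) i (v i) = s.piecewise u v := by
        rw [← hw]; exact Function.update_eq_self _ _
      rcases eq_or_lt_of_le (huv i) with he | hlt
      · rw [he, hupd]; exact ih
      · have := h i (s.piecewise u v) (u i) (v i) hlt
        rw [hupd] at this
        exact this.le.trans ih
  simpa using key Finset.univ

lemma argwise_strict (h : ArgwiseStrictMono ψ) {u v : Fin k → ℝ} (huv : u ≤ v)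
    (j : Fin k) (hj : u j < v j) : ψ u < ψ v := by
  have h1 : ψ u < ψ (Function.update u j (v j)) := by
    conv_lhs => rw [← Function.update_eq_self j u]
    exact h j u _ _ hj
  have h2 : Function.update u j (v j) ≤ v := by
    intro t
    by_cases ht : t = j
    · subst ht; simp
    · rw [Function.update_of_ne ht]; exact huv t
  exact h1.trans_le (argwise_mono h h2)

lemma psi_mid_le (hconv : StrictConvexOn ℝ Set.univ ψ) (a b : Fin k → ℝ) :
    ψ (fun t => (a t + b t) / 2) ≤ (ψ a + ψ b) / 2 := by
  have hab : (fun t => (a t + b t) / 2) = (1/2 : ℝ) • a + (1/2 : ℝ) • b := by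
    funext t; simp [Pi.smul_apply]; ring
  have := hconv.convexOn.2 (Set.mem_univ a) (Set.mem_univ b)
    (by norm_num : (0:ℝ) ≤ 1/2) (by norm_num : (0:ℝ) ≤ 1/2) (by norm_num)
  rw [smul_eq_mul, smul_eq_mul] at this
  rw [hab]; linarith [this]

lemma psi_mid_lt (hconv : StrictConvexOn ℝ Set.univ ψ) (a b : Fin k → ℝ) (hab : a ≠ b) :
    ψ (fun t => (a t + b t) / 2) < (ψ a + ψ b) / 2 := by
  have habe : (fun t => (a t + b t) / 2) = (1/2 : ℝ) • a + (1/2 : ℝ) • b := by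
    funext t; simp [Pi.smul_apply]; ring
  have := hconv.2 (Set.mem_univ a) (Set.mem_univ b) hab
    (by norm_num : (0:ℝ) < 1/2) (by norm_num : (0:ℝ) < 1/2) (by norm_num)
  rw [smul_eq_mul, smul_eq_mul] at this
  rw [habe]; linarith [this]

end Aux

section SLemmas
variable {k C : ℕ} {ψ : (Fin k → ℝ) → ℝ}

lemma S_eq (ψ : (Fin k → ℝ) → ℝ) (lam : Fin C → ℝ) (A : Matrix (Fin C) (Fin C) ℝ) :
    S ψ lam A = ∑ p : Fin C × (Fin k → Fin C),
      (lam p.1 * ∏ t, lam (p.2 t)) * ψ (fun t => A p.1 (p.2 t) - 1) := by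
  rw [S, Fintype.sum_prod_type]

lemma S_perm (ψ : (Fin k → ℝ) → ℝ) (σ : Equiv.Perm (Fin C))
    (A : Matrix (Fin C) (Fin C) ℝ) :
    S ψ (fun _ => 1/(C:ℝ)) (A.submatrix σ σ) = S ψ (fun _ => 1/(C:ℝ)) A := by
  unfold S
  refine Fintype.sum_equiv σ _ _ fun i => ?_
  refine Fintype.sum_equiv (Equiv.piCongrRight fun _ => σ) _ _ fun j => ?_
  rfl

lemma psd_smul {A : Matrix (Fin C) (Fin C) ℝ} (hA : A.PosSemidef) {c : ℝ} (hc : 0 ≤ c) :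
    (c • A).PosSemidef := by
  refine Matrix.PosSemidef.of_dotProduct_mulVec_nonneg ?_ fun x => ?_
  · show (c • A)ᴴ = c • A
    rw [conjTranspose_smul, hA.1.eq]
    simp
  · rw [smul_mulVec]
    simp only [dotProduct_smul, smul_eq_mul]
    exact mul_nonneg hc (hA.dotProduct_mulVec_nonneg x)

lemma mid_mem {A B : Matrix (Fin C) (Fin C) ℝ} (hA : A ∈ AstarSet C) (hB : B ∈ AstarSet C) :
    ((1/2 : ℝ) • A + (1/2 : ℝ) • B) ∈ AstarSet C := by
  refine ⟨(psd_smul hA.1 (by norm_num)).add (psd_smul hB.1 (by norm_num)), fun i => ?_⟩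
  simp [hA.2 i, hB.2 i]
  norm_num

lemma S_strict_mid (hk : 1 ≤ k) (hCpos : 0 < (C:ℝ)) (hconv : StrictConvexOn ℝ Set.univ ψ)
    (A B : Matrix (Fin C) (Fin C) ℝ) (i0 j0 : Fin C) (hne : A i0 j0 ≠ B i0 j0) :
    S ψ (fun _ => 1/(C:ℝ)) ((1/2 : ℝ) • A + (1/2 : ℝ) • B)
      < (S ψ (fun _ => 1/(C:ℝ)) A + S ψ (fun _ => 1/(C:ℝ)) B) / 2 := by
  have hw : (0:ℝ) < (1/(C:ℝ)) * ∏ _t : Fin k, 1/(C:ℝ) := by positivity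
  rw [S_eq, S_eq, S_eq, add_div, Finset.sum_div, Finset.sum_div, ← Finset.sum_add_distrib]
  refine Finset.sum_lt_sum (fun p _ => ?_) ⟨(i0, fun _ => j0), Finset.mem_univ _, ?_⟩
  · have harg : (fun t => ((1/2 : ℝ) • A + (1/2 : ℝ) • B) p.1 (p.2 t) - 1)
        = fun t => ((A p.1 (p.2 t) - 1) + (B p.1 (p.2 t) - 1)) / 2 := by
      funext t
      simp [Matrix.add_apply, Matrix.smul_apply, smul_eq_mul]
      ring
    rw [harg]
    have := psi_mid_le hconv (fun t => A p.1 (p.2 t) - 1) (fun t => B p.1 (p.2 t) - 1)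
    have h2 := mul_le_mul_of_nonneg_left this hw.le
    calc ((1:ℝ)/(C:ℝ) * ∏ t, 1/(C:ℝ)) * ψ (fun t => ((A p.1 (p.2 t) - 1) + (B p.1 (p.2 t) - 1)) / 2)
        ≤ ((1:ℝ)/(C:ℝ) * ∏ t, 1/(C:ℝ)) * ((ψ (fun t => A p.1 (p.2 t) - 1) + ψ (fun t => B p.1 (p.2 t) - 1)) / 2) := h2
      _ = (((1:ℝ)/(C:ℝ) * ∏ t, 1/(C:ℝ)) * ψ (fun t => A p.1 (p.2 t) - 1)) / 2
          + (((1:ℝ)/(C:ℝ) * ∏ t, 1/(C:ℝ)) * ψ (fun t => B p.1 (p.2 t) - 1)) / 2 := by ring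
  · have harg : (fun t : Fin k => ((1/2 : ℝ) • A + (1/2 : ℝ) • B) i0 j0 - 1)
        = fun t : Fin k => ((A i0 j0 - 1) + (B i0 j0 - 1)) / 2 := by
      funext t
      simp [Matrix.add_apply, Matrix.smul_apply, smul_eq_mul]
      ring
    show ((1:ℝ)/(C:ℝ) * ∏ _t : Fin k, 1/(C:ℝ)) * ψ (fun t => ((1/2:ℝ) • A + (1/2:ℝ) • B) i0 j0 - 1) < _
    rw [harg]
    have hnef : (fun _t : Fin k => A i0 j0 - 1) ≠ (fun _t : Fin k => B i0 j0 - 1) := by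
      intro h
      have := congrFun h ⟨0, hk⟩
      apply hne
      linarith [this]
    have := psi_mid_lt hconv (fun _t : Fin k => A i0 j0 - 1) (fun _t : Fin k => B i0 j0 - 1) hnef
    have h2 := mul_lt_mul_of_pos_left this hw
    calc ((1:ℝ)/(C:ℝ) * ∏ _t : Fin k, 1/(C:ℝ)) * ψ (fun _t : Fin k => ((A i0 j0 - 1) + (B i0 j0 - 1)) / 2)
        < ((1:ℝ)/(C:ℝ) * ∏ _t : Fin k, 1/(C:ℝ)) * ((ψ (fun _t : Fin k => A i0 j0 - 1) + ψ (fun _t : Fin k => B i0 j0 - 1)) / 2) := h2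
      _ = (((1:ℝ)/(C:ℝ) * ∏ _t : Fin k, 1/(C:ℝ)) * ψ (fun _t : Fin k => A i0 j0 - 1)) / 2
          + (((1:ℝ)/(C:ℝ) * ∏ _t : Fin k, 1/(C:ℝ)) * ψ (fun _t : Fin k => B i0 j0 - 1)) / 2 := by ring

end SLemmas

section A0
variable {C : ℕ}

lemma exists_perm {α : Type*} [DecidableEq α] {a b c d : α} (hab : a ≠ b) (hcd : c ≠ d) :
    ∃ σ : Equiv.Perm α, σ a = c ∧ σ b = d := by
  set σ₁ := Equiv.swap a c with hσ₁
  have h1 : σ₁ a = c := Equiv.swap_apply_left a c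
  have hb'c : σ₁ b ≠ c := by
    intro h
    exact hab (σ₁.injective (by rw [h, h1]))
  refine ⟨σ₁.trans (Equiv.swap (σ₁ b) d), ?_, ?_⟩
  · simp only [Equiv.trans_apply, h1]
    exact Equiv.swap_apply_of_ne_of_ne (Ne.symm hb'c) hcd
  · simp only [Equiv.trans_apply]
    exact Equiv.swap_apply_left _ _

lemma A0_mem (hC : 2 ≤ C) :
    (Matrix.of fun i j : Fin C => if i = j then (1:ℝ) else -1/((C:ℝ)-1)) ∈ AstarSet C := by
  have hc : (1:ℝ) < (C:ℝ) := by exact_mod_cast hC.trans_lt' one_lt_two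
  have hc1 : (0:ℝ) < (C:ℝ) - 1 := by linarith
  refine ⟨Matrix.PosSemidef.of_dotProduct_mulVec_nonneg ?_ fun x => ?_, fun i => by simp⟩
  · ext i j
    simp only [conjTranspose_apply, Matrix.of_apply, star_trivial]
    by_cases h : i = j <;> simp [h, eq_comm]
  · have hstar : star x = x := by
      funext i; simp
    rw [hstar]
    set T := ∑ j, x j with hT
    set P := ∑ j, x j ^ 2 with hP
    have hTP : T ^ 2 ≤ (C:ℝ) * P := by
      have := sq_sum_le_card_mul_sum_sq (s := Finset.univ) (f := x)
      simpa using this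
    have hPnn : 0 ≤ P := Finset.sum_nonneg fun i _ => sq_nonneg _
    have inner_eq : ∀ i, (∑ j, (if i = j then (1:ℝ) else -1/((C:ℝ)-1)) * x j)
        = (-1/((C:ℝ)-1)) * T + (1 + 1/((C:ℝ)-1)) * x i := by
      intro i
      have hterm : ∀ j, (if i = j then (1:ℝ) else -1/((C:ℝ)-1)) * x j
          = (-1/((C:ℝ)-1)) * x j + (if i = j then (1 + 1/((C:ℝ)-1)) * x j else 0) := by
        intro j
        by_cases h : i = j <;> simp [h] <;> ring
      rw [Finset.sum_congr rfl fun j _ => hterm j, Finset.sum_add_distrib,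
        Finset.sum_ite_eq, ← Finset.mul_sum]
      simp [hT]
    have expand : x ⬝ᵥ ((Matrix.of fun i j : Fin C => if i = j then (1:ℝ) else -1/((C:ℝ)-1)) *ᵥ x)
        = (-1/((C:ℝ)-1)) * T ^ 2 + (1 + 1/((C:ℝ)-1)) * P := by
      simp only [dotProduct, mulVec, Matrix.of_apply]
      rw [Finset.sum_congr rfl fun i _ => by rw [inner_eq i]]
      have : ∀ i : Fin C, x i * ((-1/((C:ℝ)-1)) * T + (1 + 1/((C:ℝ)-1)) * x i)
          = ((-1/((C:ℝ)-1)) * T) * x i + (1 + 1/((C:ℝ)-1)) * x i ^ 2 := by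
        intro i; ring
      rw [Finset.sum_congr rfl fun i _ => this i, Finset.sum_add_distrib,
        ← Finset.mul_sum, ← Finset.mul_sum, ← hT, ← hP]
      ring
    rw [expand]
    have key : (-1/((C:ℝ)-1)) * T ^ 2 + (1 + 1/((C:ℝ)-1)) * P
        = ((C:ℝ) * P - T ^ 2) / ((C:ℝ) - 1) := by
      field_simp
      ring
    rw [key]
    apply div_nonneg _ hc1.le
    linarith

end A0

/-- for balanced classes `λᵢ = 1/C`, the minimizer `A*` of `S` over `𝒜*` has
unit diagonal and all off-diagonal entries `−1/(C−1)`; consequently any `M` with unit-norm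
columns and `MᵀM = A*` (for `d ≥ C−1`) has columns summing to zero (simplex ETF). -/
theorem stmt12 (k C : ℕ) (hk : 1 ≤ k) (hC : 2 ≤ C)
    (lam : Fin C → ℝ) (hlam : ∀ i, lam i = 1 / (C : ℝ))
    (ψ : (Fin k → ℝ) → ℝ)
    (hconv : StrictConvexOn ℝ Set.univ ψ) (hmono : ArgwiseStrictMono ψ)
    (A : Matrix (Fin C) (Fin C) ℝ) (hA : A ∈ AstarSet C)
    (hmin : ∀ B ∈ AstarSet C, S ψ lam A ≤ S ψ lam B) :
    (∀ i, A i i = 1) ∧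
    (∀ i j : Fin C, i ≠ j → A i j = -1 / ((C : ℝ) - 1)) ∧
    (∀ d : ℕ, C - 1 ≤ d → ∀ M : Matrix (Fin d) (Fin C) ℝ,
      (∀ j, ∑ i, (M i j) ^ 2 = 1) → Mᵀ * M = A → ∀ r : Fin d, ∑ j, M r j = 0) := by
  have hlam' : lam = fun _ => 1/(C:ℝ) := funext hlam
  subst hlam'
  obtain ⟨hpsd, hdiag⟩ := hA
  have hc : (1:ℝ) < (C:ℝ) := by exact_mod_cast hC.trans_lt' one_lt_two
  have hc1 : (0:ℝ) < (C:ℝ) - 1 := by linarith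
  have hCpos : (0:ℝ) < (C:ℝ) := by linarith
  -- permutation invariance of the minimizer
  have hperm : ∀ (σ : Equiv.Perm (Fin C)) (i j : Fin C), A (σ i) (σ j) = A i j := by
    intro σ
    by_contra hcon
    push_neg at hcon
    obtain ⟨i0, j0, hne⟩ := hcon
    have hBmem : A.submatrix σ σ ∈ AstarSet C := ⟨hpsd.submatrix σ, fun i => hdiag _⟩
    have hSB : S ψ (fun _ => 1/(C:ℝ)) (A.submatrix σ σ) = S ψ (fun _ => 1/(C:ℝ)) A :=
      S_perm ψ σ A
    have hmidmem := mid_mem hBmem ⟨hpsd, hdiag⟩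
    have hne' : (A.submatrix σ σ) i0 j0 ≠ A i0 j0 := hne
    have hlt := S_strict_mid hk hCpos hconv (A.submatrix σ σ) A i0 j0 hne'
    have hm := hmin _ hmidmem
    rw [hSB] at hlt
    linarith
  -- off-diagonal entries are all equal
  have hoff : ∀ i j i' j' : Fin C, i ≠ j → i' ≠ j' → A i j = A i' j' := by
    intro i j i' j' hij hij'
    obtain ⟨σ, hσ1, hσ2⟩ := exists_perm hij hij'
    rw [← hσ1, ← hσ2]
    exact (hperm σ i j).symm
  have h01 : (⟨0, by omega⟩ : Fin C) ≠ ⟨1, by omega⟩ := by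
    intro h
    exact absurd (congrArg Fin.val h) (by simp)
  set ρ := A ⟨0, by omega⟩ ⟨1, by omega⟩ with hρdef
  have hAval : ∀ i j : Fin C, i ≠ j → A i j = ρ := fun i j h => hoff i j _ _ h h01
  have hAentry : ∀ i j : Fin C, A i j = if i = j then 1 else ρ := by
    intro i j
    by_cases h : i = j
    · subst h; simp [hdiag i]
    · simp [h, hAval i j h]
  -- row sums
  have hrow : ∀ i, ∑ j, A i j = 1 + ((C:ℝ) - 1) * ρ := by
    intro i
    rw [Finset.sum_congr rfl fun j _ => hAentry i j]
    have hterm : ∀ j : Fin C, (if i = j then (1:ℝ) else ρ)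
        = ρ + (if i = j then 1 - ρ else 0) := by
      intro j; by_cases h : i = j <;> simp [h]
    rw [Finset.sum_congr rfl fun j _ => hterm j, Finset.sum_add_distrib,
      Finset.sum_ite_eq, Finset.sum_const]
    simp [Finset.card_univ]
    ring
  -- PSD gives lower bound on ρ
  have hge : -1/((C:ℝ)-1) ≤ ρ := by
    have hq := hpsd.dotProduct_mulVec_nonneg (fun _ => 1)
    have hstar : star (fun _ : Fin C => (1:ℝ)) = fun _ => (1:ℝ) := by funext i; simp
    rw [hstar] at hq
    have hqq : (fun _ : Fin C => (1:ℝ)) ⬝ᵥ (A *ᵥ fun _ => (1:ℝ))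
        = (C:ℝ) * (1 + ((C:ℝ) - 1) * ρ) := by
      simp only [dotProduct, mulVec, one_mul, mul_one]
      rw [Finset.sum_congr rfl fun i _ => hrow i, Finset.sum_const]
      simp [Finset.card_univ]
      ring
    rw [hqq] at hq
    have h2 : 0 ≤ 1 + ((C:ℝ) - 1) * ρ := nonneg_of_mul_nonneg_right hq hCpos
    rw [div_le_iff₀ hc1]
    linarith
  -- minimality forces ρ = -1/(C-1)
  set A0 := (Matrix.of fun i j : Fin C => if i = j then (1:ℝ) else -1/((C:ℝ)-1)) with hA0def
  have hA0mem := A0_mem hC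
  have hρ : ρ = -1/((C:ℝ)-1) := by
    by_contra hρne
    have hρgt : -1/((C:ℝ)-1) < ρ := hge.lt_of_ne (Ne.symm hρne)
    have hlt : S ψ (fun _ => 1/(C:ℝ)) A0 < S ψ (fun _ => 1/(C:ℝ)) A := by
      rw [S_eq, S_eq]
      have hw : (0:ℝ) < (1/(C:ℝ)) * ∏ _t : Fin k, 1/(C:ℝ) := by positivity
      have hle : ∀ (i : Fin C) (j : Fin k → Fin C),
          (fun t => A0 i (j t) - 1) ≤ fun t => A i (j t) - 1 := by
        intro i j t
        simp only [hA0def, Matrix.of_apply, hAentry]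
        by_cases h : i = j t
        · simp [h]
        · simp only [h, if_false]
          linarith
      refine Finset.sum_lt_sum (fun p _ => ?_) ⟨(⟨0, by omega⟩, fun _ => ⟨1, by omega⟩),
        Finset.mem_univ _, ?_⟩
      · exact mul_le_mul_of_nonneg_left
          (argwise_mono hmono (hle p.1 p.2)) hw.le
      · refine mul_lt_mul_of_pos_left ?_ hw
        refine argwise_strict hmono (hle _ _) ⟨0, hk⟩ ?_
        have e1 : A0 (⟨0, by omega⟩ : Fin C) (⟨1, by omega⟩ : Fin C) = -1/((C:ℝ)-1) := by
          simp only [hA0def, Matrix.of_apply, if_neg h01]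
        have e2 : A (⟨0, by omega⟩ : Fin C) (⟨1, by omega⟩ : Fin C) = ρ := hρdef.symm
        simp only [e1, e2]
        linarith
    have := hmin A0 hA0mem
    linarith
  refine ⟨hdiag, fun i j hij => by rw [hAval i j hij, hρ], ?_⟩
  -- ETF part
  intro d hd M hcol hMM r
  have hrow0 : ∀ i, ∑ j, A i j = 0 := by
    intro i
    rw [hrow i, hρ]
    field_simp
    norm_num
  have hMsum : ∑ r' : Fin d, (∑ j, M r' j) ^ 2 = 0 := by
    have expand : ∀ r' : Fin d, (∑ j, M r' j) ^ 2 = ∑ j, ∑ j', M r' j * M r' j' := by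
      intro r'
      rw [sq, Finset.sum_mul_sum]
    rw [Finset.sum_congr rfl fun r' _ => expand r', Finset.sum_comm]
    have hinner : ∀ j : Fin C, ∑ r' : Fin d, ∑ j', M r' j * M r' j' = ∑ j', A j j' := by
      intro j
      rw [Finset.sum_comm]
      refine Finset.sum_congr rfl fun j' _ => ?_
      have := congrFun (congrFun hMM j) j'
      rw [← this, Matrix.mul_apply]
      simp [Matrix.transpose_apply]
    rw [Finset.sum_congr rfl fun j _ => hinner j,
      Finset.sum_congr rfl fun j _ => hrow0 j]
    simp
  have hterm : (∑ j, M r j) ^ 2 = 0 := by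
    have := (Finset.sum_eq_zero_iff_of_nonneg
      (fun i _ => sq_nonneg (∑ j, M i j))).mp hMsum r (Finset.mem_univ r)
    exact this
  exact pow_eq_zero_iff (by norm_num) |>.mp hterm
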